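/- Fix an integer b ≥ 2 and set κ_b := π√b/(√2·(b−1)). Define M̃_n(x) := x + ((b−1)/(2n))·x² + ((b−1)(b−2)/(6n²))·x³ + κ_b²·(b−1)/(b·n) for x ≥ 0 and n ≥ 1. Then (log n / n)·M̃_n^n(0) → 6/(b+1) as n → ∞. -/

import Mathlib

open Filter Real Finset


lemma my_arctan_le_self {x : ℝ} (hx : 0 ≤ x) : arctan x ≤ x := by
  have h1 : 0 ≤ arctan x := by
    rw [← Real.arctan_zero]
    exact Real.arctan_strictMono.monotone hx
  have := Real.le_tan h1 (Real.arctan_lt_pi_div_two x)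
  rwa [Real.tan_arctan] at this

lemma my_cubic_arctan {x : ℝ} (hx : 0 ≤ x) : x - x^3/3 ≤ arctan x := by
  have hd : ∀ t : ℝ, HasDerivAt (fun s : ℝ => arctan s - s + s^3/3)
      (1/(1+t^2) - 1 + t^2) t := by
    intro t
    have h1 : HasDerivAt arctan (1/(1+t^2)) t := Real.hasDerivAt_arctan t
    have h2 : HasDerivAt (fun s : ℝ => s) 1 t := hasDerivAt_id t
    have h3 : HasDerivAt (fun s : ℝ => s^3/3) (t^2) t := by
      have := (hasDerivAt_pow 3 t).div_const 3
      simpa using this.congr_deriv (by ring)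
    exact (h1.sub h2).add h3
  have hmono : Monotone (fun s : ℝ => arctan s - s + s^3/3) := by
    apply monotone_of_deriv_nonneg
    · intro t; exact (hd t).differentiableAt
    · intro t
      rw [(hd t).deriv]
      have h0 : (0:ℝ) < 1 + t^2 := by positivity
      have : 1/(1+t^2) - 1 + t^2 = t^4/(1+t^2) := by field_simp; ring
      rw [this]; positivity
  have := hmono hx
  simp only [Real.arctan_zero] at this
  nlinarith [this]


lemma my_arctan_nonneg {x : ℝ} (hx : 0 ≤ x) : 0 ≤ arctan x := by
  rw [← Real.arctan_zero]
  exact Real.arctan_strictMono.monotone hx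


lemma my_arctan_diff {u v : ℝ} (hv : 0 ≤ v) (huv : v ≤ u)
    (h1 : v * ((u - v)/(1 + v*u)) < 1) :
    arctan u = arctan v + arctan ((u - v)/(1 + v*u)) := by
  have hpos : (0:ℝ) < 1 + v * u := by nlinarith
  rw [Real.arctan_add h1]
  congr 1
  have hne : 1 - v * ((u - v) / (1 + v * u)) ≠ 0 := by
    have : 1 - v * ((u - v) / (1 + v * u)) = (1 + v^2) / (1 + v*u) := by
      field_simp; ring
    rw [this]; positivity
  rw [eq_div_iff hne]
  have e : (u - v)/(1+v*u) * (1+v*u) = u - v := div_mul_cancel₀ _ hpos.ne'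
  linear_combination -e

lemma my_harmonic (n : ℕ) : (∑ j ∈ range n, (1:ℝ)/(j+1)) ≤ Real.log n + 1 := by
  induction n with
  | zero => simp
  | succ m ih =>
    rw [Finset.sum_range_succ]
    rcases Nat.eq_zero_or_pos m with hm | hm
    · subst hm; simp
    · have hm1 : (0:ℝ) < m := by exact_mod_cast hm
      have key : Real.log m + 1/(m+1) ≤ Real.log (m+1) := by
        have h2 : Real.log ((m:ℝ)/(m+1)) ≤ (m:ℝ)/(m+1) - 1 :=
          Real.log_le_sub_one_of_pos (by positivity)
        rw [Real.log_div hm1.ne' (by positivity)] at h2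
        have : (m:ℝ)/(m+1) - 1 = -(1/(m+1)) := by field_simp; ring
        rw [this] at h2
        linarith
      push_cast
      linarith

lemma my_sqsum (n : ℕ) : (∑ j ∈ range n, (1:ℝ)/(j+1)^2) ≤ 2 := by
  have key : ∀ m : ℕ, (∑ j ∈ range m, (1:ℝ)/(j+1)^2) ≤ 2 - 2/((m:ℝ)+1) := by
    intro m
    induction m with
    | zero => simp
    | succ k ih =>
      rw [Finset.sum_range_succ]
      have hk : (0:ℝ) < k + 1 := by positivity
      have : (1:ℝ)/((k:ℝ)+1)^2 ≤ 2/((k:ℝ)+1) - 2/((k:ℝ)+1+1) := by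
        rw [div_sub_div _ _ hk.ne' (by positivity)]
        rw [div_le_div_iff₀ (by positivity) (by positivity)]
        ring_nf
        nlinarith [sq_nonneg ((k:ℝ)+1)]
      push_cast
      push_cast at ih this
      linarith
  have h2 : (0:ℝ) < 2/((n:ℝ)+1) := by positivity
  have := key n
  linarith


section PerStep
variable {h γ β a b : ℝ}

-- basic facts
lemma den_pos (ha : 0 ≤ a) (hh : 0 < h) (hγ0 : 0 ≤ γ)
    (hb : b = a + h*(1+a^2) + γ*h^2*a^3) : 0 < 1 + a*b := by
  have t1 : 0 ≤ h*(1+a^2) := by positivity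
  have t2 : 0 ≤ γ*h^2*a^3 := by positivity
  have hbnn : 0 ≤ b := by rw [hb]; linarith
  nlinarith [mul_nonneg ha hbnn]

lemma b_ge_a (ha : 0 ≤ a) (hh : 0 < h) (hγ0 : 0 ≤ γ)
    (hb : b = a + h*(1+a^2) + γ*h^2*a^3) : a ≤ b := by
  have t1 : 0 ≤ h*(1+a^2) := by positivity
  have t2 : 0 ≤ γ*h^2*a^3 := by positivity
  rw [hb]; linarith

lemma hr_identity (ha : 0 ≤ a) (hh : 0 < h) (hγ0 : 0 ≤ γ) (hβ : β = 1 - γ)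
    (hb : b = a + h*(1+a^2) + γ*h^2*a^3) :
    h - (b-a)/(1+a*b) = h^2*a*(1+β*a^2+γ*h*a^3)/(1+a*b) := by
  have h0 : (0:ℝ) < 1 + a*b := den_pos ha hh hγ0 hb
  rw [hβ, hb]
  field_simp
  ring

lemma r_nonneg (ha : 0 ≤ a) (hh : 0 < h) (hγ0 : 0 ≤ γ)
    (hb : b = a + h*(1+a^2) + γ*h^2*a^3) : 0 ≤ (b-a)/(1+a*b) := by
  have h0 : (0:ℝ) < 1 + a*b := den_pos ha hh hγ0 hb
  apply div_nonneg _ h0.le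
  nlinarith [b_ge_a ha hh hγ0 hb]

lemma r_le_h (ha : 0 ≤ a) (hh : 0 < h) (hγ0 : 0 ≤ γ) (hγ1 : γ ≤ 1) (hβ : β = 1 - γ)
    (hb : b = a + h*(1+a^2) + γ*h^2*a^3) : (b-a)/(1+a*b) ≤ h := by
  have h0 : (0:ℝ) < 1 + a*b := den_pos ha hh hγ0 hb
  have hid := hr_identity ha hh hγ0 hβ hb
  have hnum : 0 ≤ h^2*a*(1+β*a^2+γ*h*a^3) := by
    have : 0 ≤ 1 - γ := by linarith
    apply mul_nonneg (mul_nonneg (by positivity) ha)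
    nlinarith [sq_nonneg a, mul_nonneg (mul_nonneg hγ0 hh.le) (pow_nonneg ha 3)]
  nlinarith [div_nonneg hnum h0.le]

lemma r_lt_h (ha : 0 < a) (hh : 0 < h) (hγ0 : 0 ≤ γ) (hγ1 : γ ≤ 1) (hβ : β = 1 - γ)
    (hb : b = a + h*(1+a^2) + γ*h^2*a^3) : (b-a)/(1+a*b) < h := by
  have h0 : (0:ℝ) < 1 + a*b := den_pos ha.le hh hγ0 hb
  have hid := hr_identity ha.le hh hγ0 hβ hb
  have hnum : 0 < h^2*a*(1+β*a^2+γ*h*a^3) := by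
    apply mul_pos (mul_pos (by positivity) ha)
    have : 0 ≤ γ*h*a^3 := by positivity
    nlinarith [sq_nonneg a]
  nlinarith [div_pos hnum h0]

end PerStep


-- assume helpers from h1,h2,h3 exist; restate minimal ones needed for testing

section PerStep2
variable {h γ β a b : ℝ}

lemma step_upper (ha : 0 ≤ a) (hh : 0 < h) (hγ0 : 0 ≤ γ) (hγ1 : γ ≤ 1) (hβ : β = 1 - γ)
    (hb : b = a + h*(1+a^2) + γ*h^2*a^3) :
    h - arctan ((b-a)/(1+a*b)) ≤ β*h^2*a + h^2 + γ*h^3*a^2 + h^3 := by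
  have hβ0 : 0 ≤ β := by rw [hβ]; linarith
  have hr0 := r_nonneg ha hh hγ0 hb
  have hrh := r_le_h ha hh hγ0 hγ1 hβ hb
  have hcub : (b-a)/(1+a*b) - ((b-a)/(1+a*b))^3/3 ≤ arctan ((b-a)/(1+a*b)) :=
    my_cubic_arctan hr0
  have hcube : ((b-a)/(1+a*b))^3 ≤ h^3 := by
    apply pow_le_pow_left₀ hr0 hrh
  have hid := hr_identity ha hh hγ0 hβ hb
  -- main: h^2*a*(...)/(1+a*b) ≤ β*h^2*a + h^2 + γ*h^3*a^2
  have h0 : (0:ℝ) < 1 + a*b := den_pos ha hh hγ0 hb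
  have h1 : (0:ℝ) < 1 + a^2 := by positivity
  have h1ab : 1 + a^2 ≤ 1 + a*b := by
    have := b_ge_a ha hh hγ0 hb
    nlinarith
  have hnum : 0 ≤ h^2*a*(1+β*a^2+γ*h*a^3) := by
    apply mul_nonneg (mul_nonneg (by positivity) ha)
    have : 0 ≤ γ*h*a^3 := by positivity
    nlinarith [sq_nonneg a]
  have key1 : h^2*a*(1+β*a^2+γ*h*a^3)/(1+a*b) ≤ h^2*a*(1+β*a^2+γ*h*a^3)/(1+a^2) :=
    div_le_div_of_nonneg_left hnum h1 h1ab
  have key2 : h^2*a*(1+β*a^2+γ*h*a^3)/(1+a^2) ≤ β*h^2*a + h^2 + γ*h^3*a^2 := by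
    rw [div_le_iff₀ h1]
    have e1 : (0:ℝ) ≤ h^2*(a^2 - a + 1) := by
      apply mul_nonneg (by positivity)
      nlinarith [sq_nonneg (2*a-1)]
    have e2 : (0:ℝ) ≤ β*h^2*a := by positivity
    have e3 : (0:ℝ) ≤ γ*h^3*a^2 := by positivity
    nlinarith [e1, e2, e3]
  have hh3 : (0:ℝ) ≤ h^3 := by positivity
  linarith

lemma key_AB {A B : ℝ} (hA0 : 0 < A) (hA : A ≤ 1/10) (hB0 : 0 < B) (hB : B ≤ 1/4) :
    (1+A+B)*(1-3*A-3*B)*(1+A+B+A*B+A^2) ≤ 1 := by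
  nlinarith [sq_nonneg (A+B), sq_nonneg (A-B), mul_pos hA0 hB0, sq_nonneg A, sq_nonneg B,
    mul_nonneg (mul_nonneg hA0.le hA0.le) hB0.le, mul_nonneg (mul_nonneg hA0.le hB0.le) hB0.le,
    mul_nonneg (mul_nonneg hA0.le hA0.le) hA0.le, mul_nonneg (mul_nonneg hB0.le hB0.le) hB0.le]

set_option maxHeartbeats 4000000 in
lemma step_lower (ha : 2 ≤ a) (hh : 0 < h) (hha : h*a ≤ 1/10)
    (hγ0 : 0 ≤ γ) (hγ1 : γ ≤ 1) (hβ : β = 1 - γ)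
    (hb : b = a + h*(1+a^2) + γ*h^2*a^3) :
    β*h*(Real.log b - Real.log a) - 3*β*h^2*(b-a) - 3*β*h*(1/a^2 - 1/b^2)
      ≤ h - arctan ((b-a)/(1+a*b)) := by
  have ha0 : (0:ℝ) < a := by linarith
  have hβ0 : 0 ≤ β := by rw [hβ]; linarith
  have hb0 : a ≤ b := b_ge_a ha0.le hh hγ0 hb
  have hbpos : (0:ℝ) < b := by linarith
  have h0 : (0:ℝ) < 1 + a*b := den_pos ha0.le hh hγ0 hb
  have hr0 := r_nonneg ha0.le hh hγ0 hb
  have hrh := r_le_h ha0.le hh hγ0 hγ1 hβ hb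
  have harc : arctan ((b-a)/(1+a*b)) ≤ (b-a)/(1+a*b) := my_arctan_le_self hr0
  have hid := hr_identity ha0.le hh hγ0 hβ hb
  have hApos : 0 < h*a := by positivity
  have hBpos : 0 < 1/a^2 := by positivity
  have hBle : 1/a^2 ≤ (1:ℝ)/4 := by
    rw [div_le_div_iff₀ (by positivity) (by norm_num)]
    nlinarith
  -- log facts
  have hlogm : (Real.log b - Real.log a)*a ≤ b - a := by
    have h2 : Real.log (b/a) ≤ b/a - 1 := Real.log_le_sub_one_of_pos (by positivity)
    rw [Real.log_div hbpos.ne' ha0.ne'] at h2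
    have h3 := mul_le_mul_of_nonneg_right h2 ha0.le
    have h4 : (b/a - 1)*a = b - a := by field_simp
    linarith [h4 ▸ h3]
  have hlog0 : 0 ≤ Real.log b - Real.log a := by
    have := Real.log_le_log ha0 hb0; linarith
  -- growth facts
  have f1 : h*a^2 ≤ (1/10)*a := by nlinarith [mul_le_mul_of_nonneg_right hha ha0.le]
  have xnn : (0:ℝ) ≤ (h*a)*(h*a) := by positivity
  have g1 : (h*a)*(h*a) ≤ 1/100 := by nlinarith [mul_le_mul hha hha (by positivity : (0:ℝ) ≤ h*a) (by norm_num : (0:ℝ) ≤ 1/10)]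
  have g2 : γ*((h*a)*(h*a)) ≤ 1/100 := by nlinarith [mul_nonneg (by linarith : (0:ℝ) ≤ 1 - γ) xnn]
  have f2 : γ*h^2*a^3 ≤ (1/100)*a := by
    have e : γ*h^2*a^3 = (γ*((h*a)*(h*a)))*a := by ring
    rw [e]
    exact mul_le_mul_of_nonneg_right g2 ha0.le
  have h20 : h ≤ 1/20 := by
    have := mul_le_mul_of_nonneg_left ha hh.le
    linarith
  have fh : h ≤ (1/20)*a := by nlinarith
  have hblt : b ≤ (6/5)*a := by
    rw [hb]
    have e : a + h*(1+a^2) + γ*h^2*a^3 = a + h + h*a^2 + γ*h^2*a^3 := by ring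
    rw [e]
    linarith
  have hΔ0 : 0 ≤ b - a := by linarith
  have hD0 : 0 ≤ 1/a^2 - 1/b^2 := by
    have e1 : 1/a^2 - 1/b^2 = (b-a)*(b+a)/(a^2*b^2) := by field_simp; ring
    rw [e1]; positivity
  -- m1 : L*(h*a) ≤ h*(b-a)
  have m1 : (Real.log b - Real.log a)*(h*a) ≤ h*(b-a) := by
    have e : (Real.log b - Real.log a)*(h*a) = h*((Real.log b - Real.log a)*a) := by ring
    rw [e]
    exact mul_le_mul_of_nonneg_left hlogm hh.le
  -- m2 : L*(1/a^2) ≤ D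
  have m2 : (Real.log b - Real.log a)*(1/a^2) ≤ 1/a^2 - 1/b^2 := by
    have H3' : (b-a) ≤ (1/a^2 - 1/b^2)*a^3 := by
      have e1 : (1/a^2 - 1/b^2)*a^3 = (b-a)*(b+a)*(a^3/(a^2*b^2)) := by field_simp; ring
      have e2 : a^3/(a^2*b^2) = a/b^2 := by field_simp
      rw [e1, e2]
      have hbb : b^2 ≤ a*(b+a) := by
        nlinarith [mul_le_mul_of_nonneg_right hblt hbpos.le, mul_le_mul_of_nonneg_left hblt ha0.le]
      have e3 : (b-a)*(b+a)*(a/b^2) = (b-a)*((b+a)*a/b^2) := by ring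
      rw [e3]
      have e4 : (1:ℝ) ≤ (b+a)*a/b^2 := by
        rw [le_div_iff₀ (by positivity)]
        nlinarith
      nlinarith [mul_le_mul_of_nonneg_left e4 hΔ0]
    have e5 : (Real.log b - Real.log a)*(1/a^2)*a^3 = (Real.log b - Real.log a)*a := by
      field_simp
    have e6 : (Real.log b - Real.log a)*(1/a^2)*a^3 ≤ (1/a^2 - 1/b^2)*a^3 := by
      rw [e5]; linarith
    exact le_of_mul_le_mul_right e6 (by positivity)
  -- H2' : L ≤ h*a*(1+h*a+1/a^2)
  have H2' : Real.log b - Real.log a ≤ h*a*(1+h*a+1/a^2) := by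
    have e0 : h*a*(1+h*a+1/a^2)*a = h*a^2 + (h*a^2)*(h*a) + h := by field_simp
    have e1 : b - a ≤ h*a^2 + (h*a^2)*(h*a) + h := by
      rw [hb]
      have xp : (0:ℝ) ≤ h^2*a^3 := by positivity
      have : γ*h^2*a^3 ≤ (h*a^2)*(h*a) := by nlinarith [mul_nonneg (by linarith : (0:ℝ) ≤ 1-γ) xp]
      nlinarith
    have e2 : (Real.log b - Real.log a)*a ≤ h*a*(1+h*a+1/a^2)*a := by rw [e0]; linarith
    exact le_of_mul_le_mul_right e2 ha0
  -- G1 : β*h^2*a^3/(1+a*b) ≤ h - r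
  have G1 : β*h^2*a^3/(1+a*b) ≤ h - (b-a)/(1+a*b) := by
    rw [hid]
    have p1 : (0:ℝ) ≤ h^2*a := by positivity
    have p2 : (0:ℝ) ≤ γ*h*a^3 := by positivity
    have hnum2 : β*h^2*a^3 ≤ h^2*a*(1+β*a^2+γ*h*a^3) := by
      nlinarith [mul_nonneg p1 p2]
    exact div_le_div_of_nonneg_right hnum2 h0.le
  -- final combination
  have hsuff : β*h*(Real.log b - Real.log a)
      ≤ (h - (b-a)/(1+a*b)) + 3*β*h^2*(b-a) + 3*β*h*(1/a^2 - 1/b^2) := by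
    have w3 : β*h*((Real.log b - Real.log a)*(h*a)) ≤ β*h*(h*(b-a)) :=
      mul_le_mul_of_nonneg_left m1 (by positivity)
    have w4 : β*h*((Real.log b - Real.log a)*(1/a^2)) ≤ β*h*(1/a^2 - 1/b^2) :=
      mul_le_mul_of_nonneg_left m2 (by positivity)
    have e0 : β*h*(Real.log b - Real.log a) =
        β*h*((Real.log b - Real.log a)*(1-3*(h*a)-3*(1/a^2)))
        + 3*(β*h*((Real.log b - Real.log a)*(h*a)))
        + 3*(β*h*((Real.log b - Real.log a)*(1/a^2))) := by ring
    rcases le_or_gt 0 (1-3*(h*a)-3*(1/a^2)) with hcase | hcase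
    · -- positive branch
      have t2 : (Real.log b - Real.log a)*(1-3*(h*a)-3*(1/a^2))
          ≤ (h*a*(1+h*a+1/a^2))*(1-3*(h*a)-3*(1/a^2)) :=
        mul_le_mul_of_nonneg_right H2' hcase
      -- G2 : (h*a*(1+h*a+1/a^2))*(1-3*h*a-3*(1/a^2)) ≤ h*a^3/(1+a*b)
      have q1 : 1+a*b ≤ a^2*(1+h*a+1/a^2+(h*a)*(1/a^2)+(h*a)^2) := by
        have eQ : a^2*(1+h*a+1/a^2+(h*a)*(1/a^2)+(h*a)^2)
            = a^2 + h*a^3 + 1 + h*a + h^2*a^4 := by field_simp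
        rw [eQ, hb]
        have xp : (0:ℝ) ≤ (1-γ)*(h^2*a^4) := by
          apply mul_nonneg (by linarith) (by positivity)
        nlinarith [xp]
      have KEY := key_AB hApos hha hBpos hBle
      have G2 : (h*a*(1+h*a+1/a^2))*(1-3*(h*a)-3*(1/a^2)) ≤ h*a^3/(1+a*b) := by
        rw [le_div_iff₀ h0]
        have p0 : (0:ℝ) ≤ h*a*((1+h*a+1/a^2)*(1-3*(h*a)-3*(1/a^2))) := by
          apply mul_nonneg (by positivity)
          apply mul_nonneg (by positivity) hcase
        calc (h*a*(1+h*a+1/a^2))*(1-3*(h*a)-3*(1/a^2))*(1+a*b)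
            = h*a*((1+h*a+1/a^2)*(1-3*(h*a)-3*(1/a^2)))*(1+a*b) := by ring
          _ ≤ h*a*((1+h*a+1/a^2)*(1-3*(h*a)-3*(1/a^2)))*(a^2*(1+h*a+1/a^2+(h*a)*(1/a^2)+(h*a)^2)) :=
              mul_le_mul_of_nonneg_left q1 p0
          _ = h*a^3*((1+(h*a)+(1/a^2))*(1-3*(h*a)-3*(1/a^2))*(1+(h*a)+(1/a^2)+(h*a)*(1/a^2)+(h*a)^2)) := by
              ring
          _ ≤ h*a^3*1 := by
              apply mul_le_mul_of_nonneg_left KEY (by positivity)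
          _ = h*a^3 := by ring
      have w1 : β*h*((Real.log b - Real.log a)*(1-3*(h*a)-3*(1/a^2)))
          ≤ β*h*(h*a^3/(1+a*b)) :=
        mul_le_mul_of_nonneg_left (t2.trans G2) (by positivity)
      have e1 : β*h*(h*a^3/(1+a*b)) = β*h^2*a^3/(1+a*b) := by ring
      rw [e1] at w1
      linarith [w1, w3, w4, G1, e0]
    · -- negative branch
      have c1 : (Real.log b - Real.log a)*(1-3*(h*a)-3*(1/a^2)) ≤ 0 :=
        mul_nonpos_of_nonneg_of_nonpos hlog0 (by linarith)
      have w1 : β*h*((Real.log b - Real.log a)*(1-3*(h*a)-3*(1/a^2))) ≤ 0 :=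
        mul_nonpos_of_nonneg_of_nonpos (by positivity) c1
      have hpos0 : 0 ≤ h - (b-a)/(1+a*b) := by linarith [hrh]
      linarith [w1, w3, w4, hpos0, e0]
  linarith [harc, hsuff]

end PerStep2



set_option maxHeartbeats 8000000 in
lemma core (n : ℕ) (hn : 16 ≤ n) (γ β h : ℝ) (hγ0 : 0 ≤ γ) (hγ1 : γ ≤ 1)
    (hβ : β = 1 - γ) (hh : h = π/(2*n)) (y : ℕ → ℝ) (hy0 : y 0 = 0)
    (hrec : ∀ k, y (k+1) = y k + h*(1+(y k)^2) + γ*h^2*(y k)^3) :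
    (π/2 - arctan (y n) ≤ β*h*Real.log n + 10*h) ∧
    (β*h*Real.log (y n) - 20*h ≤ π/2 - arctan (y n)) ∧ (0 < y n) := by
  have hn0 : 0 < n := by omega
  have hnR : (0:ℝ) < n := by exact_mod_cast hn0
  have hnR16 : (16:ℝ) ≤ n := by exact_mod_cast hn
  have hpi : π < 3.15 := Real.pi_lt_d2
  have hpi0 : 0 < π := Real.pi_pos
  have hpos : 0 < h := by rw [hh]; positivity
  have h10 : h ≤ 1/10 := by
    rw [hh, div_le_div_iff₀ (by positivity) (by norm_num)]
    nlinarith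
  have nh : (n:ℝ)*h = π/2 := by rw [hh]; field_simp
  have hβ0 : 0 ≤ β := by rw [hβ]; linarith
  have hβ1 : β ≤ 1 := by rw [hβ]; linarith
  -- nonnegativity and monotonicity
  have ynn : ∀ k, 0 ≤ y k := by
    intro k
    induction k with
    | zero => rw [hy0]
    | succ m ih => exact le_trans ih (b_ge_a ih hpos hγ0 (hrec m))
  have ymono1 : ∀ k, y k ≤ y (k+1) := fun k => b_ge_a (ynn k) hpos hγ0 (hrec k)
  have ymono : Monotone y := monotone_nat_of_le_succ ymono1
  have ypos : ∀ k, 1 ≤ k → 0 < y k := by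
    intro k hk
    have h1 : y 1 = h := by rw [hrec 0, hy0]; ring
    calc (0:ℝ) < h := hpos
      _ = y 1 := h1.symm
      _ ≤ y k := ymono hk
  -- the bound y k ≤ 1/((n-k)*h) given arctan (y k) ≤ k*h
  have ybd : ∀ k, k < n → arctan (y k) ≤ k*h → y k ≤ 1/(((n-k:ℕ):ℝ)*h) := by
    intro k hk hphi
    have hnk1 : 1 ≤ n - k := by omega
    have hnkR : (1:ℝ) ≤ ((n-k:ℕ):ℝ) := by exact_mod_cast hnk1
    rcases Nat.eq_zero_or_pos k with hk0 | hk1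
    · subst hk0
      rw [hy0]
      positivity
    · -- y k = tan (arctan (y k)) ≤ tan (k*h)
      have hcast : ((n-k:ℕ):ℝ) = (n:ℝ) - k := by
        have : (k:ℝ) ≤ n := by exact_mod_cast hk.le
        push_cast [Nat.cast_sub hk.le]
        ring
      have hkh2 : (k:ℝ)*h < π/2 := by
        have : (k:ℝ) ≤ (n:ℝ) - 1 := by
          have : k + 1 ≤ n := hk
          have := (Nat.cast_le (α := ℝ)).mpr this
          push_cast at this
          linarith
        nlinarith
      have hkh0 : 0 ≤ (k:ℝ)*h := by positivity
      have htan : y k ≤ Real.tan ((k:ℝ)*h) := by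
        have e1 : y k = Real.tan (arctan (y k)) := (Real.tan_arctan _).symm
        rw [e1]
        rcases eq_or_lt_of_le hphi with heq | hlt
        · rw [heq]
        · exact le_of_lt (Real.tan_lt_tan_of_nonneg_of_lt_pi_div_two
            (my_arctan_nonneg (ynn k)) hkh2 hlt)
      have e2 : (k:ℝ)*h = π/2 - ((n-k:ℕ):ℝ)*h := by
        rw [hcast]; nlinarith [nh]
      have e3 : Real.tan ((k:ℝ)*h) = (Real.tan (((n-k:ℕ):ℝ)*h))⁻¹ := by
        rw [e2, Real.tan_pi_div_two_sub]
      have htpos : 0 < ((n-k:ℕ):ℝ)*h := by positivity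
      have htlt : ((n-k:ℕ):ℝ)*h < π/2 := by
        have : ((n-k:ℕ):ℝ) ≤ (n:ℝ) - 1 := by
          rw [hcast]
          have : (1:ℝ) ≤ k := by exact_mod_cast hk1
          linarith
        nlinarith
      have hletan := Real.le_tan htpos.le htlt
      have : (Real.tan (((n-k:ℕ):ℝ)*h))⁻¹ ≤ (((n-k:ℕ):ℝ)*h)⁻¹ := by
        apply inv_anti₀ htpos hletan
      rw [one_div]
      calc y k ≤ Real.tan ((k:ℝ)*h) := htan
        _ = (Real.tan (((n-k:ℕ):ℝ)*h))⁻¹ := e3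
        _ ≤ (((n-k:ℕ):ℝ)*h)⁻¹ := this
  -- main induction: arctan (y k) ≤ k*h, with step identity
  have philes : ∀ k, k ≤ n → arctan (y k) ≤ k*h := by
    intro k
    induction k with
    | zero => intro _; rw [hy0]; simp
    | succ m ih =>
      intro hm
      have hmn : m < n := by omega
      have ihm := ih hmn.le
      have hybd := ybd m hmn ihm
      have hprod : y m * ((y (m+1) - y m)/(1 + y m * y (m+1))) < 1 := by
        rcases eq_or_lt_of_le (ynn m) with h0 | h0
        · rw [← h0]; norm_num
        · have hr := r_lt_h h0 hpos hγ0 hγ1 hβ (hrec m)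
          have hyh : y m * h ≤ 1 := by
            have hnk1 : (1:ℝ) ≤ ((n-m:ℕ):ℝ) := by
              have : 1 ≤ n - m := by omega
              exact_mod_cast this
            rw [le_div_iff₀ (by positivity)] at hybd
            nlinarith [mul_nonneg (mul_nonneg (ynn m) hpos.le) (by linarith : (0:ℝ) ≤ ((n-m:ℕ):ℝ) - 1)]
          calc y m * ((y (m+1) - y m)/(1 + y m * y (m+1))) < y m * h := by
                apply mul_lt_mul_of_pos_left hr h0
            _ ≤ 1 := by nlinarith
      have hid := my_arctan_diff (ynn m) (ymono1 m) hprod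
      rw [hid]
      have har : arctan ((y (m+1) - y m)/(1 + y m * y (m+1))) ≤ h := by
        calc arctan ((y (m+1) - y m)/(1 + y m * y (m+1)))
            ≤ (y (m+1) - y m)/(1 + y m * y (m+1)) :=
              my_arctan_le_self (r_nonneg (ynn m) hpos hγ0 (hrec m))
          _ ≤ h := r_le_h (ynn m) hpos hγ0 hγ1 hβ (hrec m)
      push_cast
      linarith
  have ybd' : ∀ k, k < n → y k ≤ 1/(((n-k:ℕ):ℝ)*h) := fun k hk => ybd k hk (philes k hk.le)
  have step_id : ∀ k, k < n → arctan (y (k+1)) = arctan (y k)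
      + arctan ((y (k+1) - y k)/(1 + y k * y (k+1))) := by
    intro k hk
    have hybd := ybd' k hk
    have hprod : y k * ((y (k+1) - y k)/(1 + y k * y (k+1))) < 1 := by
      rcases eq_or_lt_of_le (ynn k) with h0 | h0
      · rw [← h0]; norm_num
      · have hr := r_lt_h h0 hpos hγ0 hγ1 hβ (hrec k)
        have hyh : y k * h ≤ 1 := by
          have hnk1 : (1:ℝ) ≤ ((n-k:ℕ):ℝ) := by
            have : 1 ≤ n - k := by omega
            exact_mod_cast this
          rw [le_div_iff₀ (by positivity)] at hybd
          nlinarith [mul_nonneg (mul_nonneg (ynn k) hpos.le) (by linarith : (0:ℝ) ≤ ((n-k:ℕ):ℝ) - 1)]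
        calc y k * ((y (k+1) - y k)/(1 + y k * y (k+1))) < y k * h :=
              mul_lt_mul_of_pos_left hr h0
          _ ≤ 1 := by nlinarith
    exact my_arctan_diff (ynn k) (ymono1 k) hprod
  -- telescoping
  have tele : ∀ m, m ≤ n → arctan (y m)
      = ∑ k ∈ range m, arctan ((y (k+1) - y k)/(1 + y k * y (k+1))) := by
    intro m
    induction m with
    | zero => intro _; simp [hy0]
    | succ m ih =>
      intro hm
      rw [Finset.sum_range_succ, ← ih (by omega), ← step_id m (by omega)]
  have eps_eq : π/2 - arctan (y n)
      = ∑ k ∈ range n, (h - arctan ((y (k+1) - y k)/(1 + y k * y (k+1)))) := by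
    rw [Finset.sum_sub_distrib, Finset.sum_const, card_range, nsmul_eq_mul, ← tele n le_rfl, nh]
  have Snn : ∀ k, 0 ≤ h - arctan ((y (k+1) - y k)/(1 + y k * y (k+1))) := by
    intro k
    have h1 := my_arctan_le_self (r_nonneg (ynn k) hpos hγ0 (hrec k))
    have h2 := r_le_h (ynn k) hpos hγ0 hγ1 hβ (hrec k)
    linarith
  -- upper bound for the sum
  have hyh1 : ∀ k, k < n → h * y k ≤ 1 := by
    intro k hk
    have hybd := ybd' k hk
    have hnk1 : (1:ℝ) ≤ ((n-k:ℕ):ℝ) := by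
      have : 1 ≤ n - k := by omega
      exact_mod_cast this
    rw [le_div_iff₀ (by positivity)] at hybd
    nlinarith [mul_nonneg (mul_nonneg (ynn k) hpos.le) (by linarith : (0:ℝ) ≤ ((n-k:ℕ):ℝ) - 1)]
  have sum_y : ∑ k ∈ range n, y k ≤ (Real.log n + 1)/h := by
    have s1 : ∑ k ∈ range n, y k ≤ ∑ k ∈ range n, 1/(((n-k:ℕ):ℝ)*h) :=
      Finset.sum_le_sum (fun k hk => ybd' k (mem_range.mp hk))
    have s2 : ∑ k ∈ range n, 1/(((n-k:ℕ):ℝ)*h) = ∑ j ∈ range n, 1/((((j:ℕ):ℝ)+1)*h) := by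
      rw [← Finset.sum_range_reflect (fun j => 1/((((j:ℕ):ℝ)+1)*h)) n]
      apply Finset.sum_congr rfl
      intro k hk
      have hk' := mem_range.mp hk
      have e : (n-1-k)+1 = n - k := by omega
      have eR : ((n-k:ℕ):ℝ) = ((n-1-k:ℕ):ℝ) + 1 := by rw [← e]; push_cast; ring
      rw [eR]
    have s3 : ∑ j ∈ range n, 1/((((j:ℕ):ℝ)+1)*h) = (1/h) * ∑ j ∈ range n, 1/(((j:ℕ):ℝ)+1) := by
      rw [Finset.mul_sum]
      apply Finset.sum_congr rfl
      intro j _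
      rw [one_div, one_div, one_div, mul_inv]
      ring
    have s4 : (1/h) * ∑ j ∈ range n, 1/(((j:ℕ):ℝ)+1) ≤ (1/h) * (Real.log n + 1) :=
      mul_le_mul_of_nonneg_left (my_harmonic n) (by positivity)
    calc ∑ k ∈ range n, y k ≤ ∑ k ∈ range n, 1/(((n-k:ℕ):ℝ)*h) := s1
      _ = (1/h) * ∑ j ∈ range n, 1/(((j:ℕ):ℝ)+1) := by rw [s2, s3]
      _ ≤ (1/h) * (Real.log n + 1) := s4
      _ = (Real.log n + 1)/h := by ring
  have sum_y2 : ∑ k ∈ range n, (y k)^2 ≤ 2/h^2 := by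
    have s1 : ∑ k ∈ range n, (y k)^2 ≤ ∑ k ∈ range n, (1/(((n-k:ℕ):ℝ)*h))^2 :=
      Finset.sum_le_sum (fun k hk => pow_le_pow_left₀ (ynn k) (ybd' k (mem_range.mp hk)) 2)
    have s2 : ∑ k ∈ range n, (1/(((n-k:ℕ):ℝ)*h))^2 = ∑ j ∈ range n, (1/((((j:ℕ):ℝ)+1)*h))^2 := by
      rw [← Finset.sum_range_reflect (fun j => (1/((((j:ℕ):ℝ)+1)*h))^2) n]
      apply Finset.sum_congr rfl
      intro k hk
      have hk' := mem_range.mp hk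
      have e : (n-1-k)+1 = n - k := by omega
      have eR : ((n-k:ℕ):ℝ) = ((n-1-k:ℕ):ℝ) + 1 := by rw [← e]; push_cast; ring
      rw [eR]
    have s3 : ∑ j ∈ range n, (1/((((j:ℕ):ℝ)+1)*h))^2
        = (1/h^2) * ∑ j ∈ range n, 1/(((j:ℕ):ℝ)+1)^2 := by
      rw [Finset.mul_sum]
      apply Finset.sum_congr rfl
      intro j _
      rw [div_pow, one_pow, mul_pow]
      rw [one_div, one_div, one_div, mul_inv]
      ring
    have s4 : (1/h^2) * ∑ j ∈ range n, 1/(((j:ℕ):ℝ)+1)^2 ≤ (1/h^2) * 2 :=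
      mul_le_mul_of_nonneg_left (my_sqsum n) (by positivity)
    calc ∑ k ∈ range n, (y k)^2 ≤ ∑ k ∈ range n, (1/(((n-k:ℕ):ℝ)*h))^2 := s1
      _ = (1/h^2) * ∑ j ∈ range n, 1/(((j:ℕ):ℝ)+1)^2 := by rw [s2, s3]
      _ ≤ (1/h^2) * 2 := s4
      _ = 2/h^2 := by ring
  have upper : π/2 - arctan (y n) ≤ β*h*Real.log n + 10*h := by
    have b1 : ∑ k ∈ range n, (h - arctan ((y (k+1) - y k)/(1 + y k * y (k+1))))
        ≤ ∑ k ∈ range n, (β*h^2*(y k) + h^2 + γ*h^3*(y k)^2 + h^3) :=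
      Finset.sum_le_sum (fun k _ => step_upper (ynn k) hpos hγ0 hγ1 hβ (hrec k))
    have b2 : ∑ k ∈ range n, (β*h^2*(y k) + h^2 + γ*h^3*(y k)^2 + h^3)
        = β*h^2*(∑ k ∈ range n, y k) + (n:ℝ)*h^2 + γ*h^3*(∑ k ∈ range n, (y k)^2) + (n:ℝ)*h^3 := by
      rw [Finset.sum_add_distrib, Finset.sum_add_distrib, Finset.sum_add_distrib,
        Finset.sum_const, Finset.sum_const, card_range, ← Finset.mul_sum, ← Finset.mul_sum]
      push_cast
      ring
    have t1 : β*h^2*(∑ k ∈ range n, y k) ≤ β*h^2*((Real.log n + 1)/h) :=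
      mul_le_mul_of_nonneg_left sum_y (by positivity)
    have e1 : β*h^2*((Real.log n + 1)/h) = β*h*Real.log n + β*h := by field_simp
    have t2 : γ*h^3*(∑ k ∈ range n, (y k)^2) ≤ γ*h^3*(2/h^2) :=
      mul_le_mul_of_nonneg_left sum_y2 (by positivity)
    have e2 : γ*h^3*(2/h^2) = 2*γ*h := by field_simp
    have e3 : (n:ℝ)*h^2 = (π/2)*h := by
      have : (n:ℝ)*h^2 = ((n:ℝ)*h)*h := by ring
      rw [this, nh]
    have e4 : (n:ℝ)*h^3 = (π/2)*h^2 := by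
      have : (n:ℝ)*h^3 = ((n:ℝ)*h)*h^2 := by ring
      rw [this, nh]
    have e5 : (π/2)*h^2 ≤ (π/2)*((1/10)*h) := by nlinarith
    have e6 : 0 ≤ (1-β)*h := mul_nonneg (by linarith) hpos.le
    have e7 : 0 ≤ (1-γ)*h := mul_nonneg (by linarith) hpos.le
    rw [eps_eq]
    calc ∑ k ∈ range n, (h - arctan ((y (k+1) - y k)/(1 + y k * y (k+1))))
        ≤ β*h^2*(∑ k ∈ range n, y k) + (n:ℝ)*h^2 + γ*h^3*(∑ k ∈ range n, (y k)^2) + (n:ℝ)*h^3 := by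
          rw [← b2]; exact b1
      _ ≤ β*h*Real.log n + 10*h := by nlinarith [t1, t2, e1, e2, e3, e4, e5, e6, e7]
  refine ⟨upper, ?_, ypos n (by omega)⟩
  -- lower bound
  have eps0 : 0 ≤ π/2 - arctan (y n) := by linarith [Real.arctan_lt_pi_div_two (y n)]
  rcases lt_or_ge (y (n-10)) 2 with hsm | hlg
  · -- small case : y n stays bounded
    have grow : ∀ j, j ≤ 10 → y (n-10+j) ≤ 3^j*(5/2) - 1/2 := by
      intro j
      induction j with
      | zero =>
        intro _
        simp only [Nat.add_zero, pow_zero]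
        linarith
      | succ m ihm =>
        intro hm
        have hk : n-10+m < n := by omega
        have hyh : h * y (n-10+m) ≤ 1 := hyh1 _ hk
        have e : n-10+(m+1) = (n-10+m)+1 := by omega
        rw [e, hrec (n-10+m)]
        have hy0' := ynn (n-10+m)
        have ihm' := ihm (by omega)
        have p3 : (0:ℝ) < 3^m := by positivity
        have b1 : h*(y (n-10+m))^2 ≤ y (n-10+m) := by nlinarith
        have b2 : γ*h^2*(y (n-10+m))^3 ≤ y (n-10+m) := by
          have hPnn : 0 ≤ (h*y (n-10+m))*(h*y (n-10+m)) := by positivity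
          have q1 : (h*y (n-10+m))*(h*y (n-10+m)) ≤ 1 := by
            nlinarith [mul_nonneg hpos.le hy0']
          have q2 : γ*h^2*(y (n-10+m))^3 = γ*((h*y (n-10+m))*(h*y (n-10+m)))*(y (n-10+m)) := by ring
          rw [q2]
          have t1 : 0 ≤ ((1-γ)*((h*y (n-10+m))*(h*y (n-10+m))))*(y (n-10+m)) :=
            mul_nonneg (mul_nonneg (by linarith) hPnn) hy0'
          have t2 : 0 ≤ (1 - (h*y (n-10+m))*(h*y (n-10+m)))*(y (n-10+m)) :=
            mul_nonneg (by linarith) hy0'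
          nlinarith [t1, t2]
        have : (3:ℝ)^(m+1)*(5/2) - 1/2 = 3*((3:ℝ)^m*(5/2) - 1/2) + 1 := by ring
        rw [this]
        nlinarith
    have yle : y n ≤ 3^10*(5/2) := by
      have hg := grow 10 le_rfl
      have e : n-10+10 = n := by omega
      rw [e] at hg
      linarith
    have logle : Real.log (y n) ≤ 20 := by
      have e2 : (9/4:ℝ) ≤ Real.exp (5/4) := by nlinarith [Real.add_one_le_exp (5/4:ℝ)]
      have e1 : ((9/4:ℝ))^16 ≤ (Real.exp (5/4))^16 := pow_le_pow_left₀ (by norm_num) e2 16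
      have e3 : (Real.exp (5/4))^16 = Real.exp 20 := by
        rw [← Real.exp_nat_mul]
        norm_num
      have h1 : y n ≤ Real.exp 20 := by
        calc y n ≤ 3^10*(5/2) := yle
          _ ≤ (9/4:ℝ)^16 := by norm_num
          _ ≤ Real.exp 20 := e3 ▸ e1
      calc Real.log (y n) ≤ Real.log (Real.exp 20) :=
            Real.log_le_log (ypos n (by omega)) h1
        _ = 20 := Real.log_exp 20
    have hfin : β*h*Real.log (y n) ≤ 20*h := by
      rcases le_or_gt (Real.log (y n)) 0 with hl | hl
      · have t1 : β*h*Real.log (y n) ≤ 0 :=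
          mul_nonpos_of_nonneg_of_nonpos (by positivity) hl
        nlinarith
      · have t1 : β*h*Real.log (y n) ≤ β*h*20 :=
          mul_le_mul_of_nonneg_left logle (by positivity)
        nlinarith [mul_nonneg (by linarith : (0:ℝ) ≤ 1 - β) hpos.le]
    linarith
  · -- main case
    have hex : ∃ k, 2 ≤ y k := ⟨n-10, hlg⟩
    have hK2 : 2 ≤ y (Nat.find hex) := Nat.find_spec hex
    have hKle : Nat.find hex ≤ n-10 := Nat.find_min' hex hlg
    have hK1 : 1 ≤ Nat.find hex := by
      rcases Nat.eq_zero_or_pos (Nat.find hex) with h0 | h0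
      · exfalso; rw [h0] at hK2; rw [hy0] at hK2; linarith
      · exact h0
    have hKmin : y (Nat.find hex - 1) < 2 := by
      have := Nat.find_min hex (m := Nat.find hex - 1) (by omega)
      linarith [not_le.mp this]
    have hyK3 : y (Nat.find hex) ≤ 3 := by
      have e : Nat.find hex = (Nat.find hex - 1)+1 := by omega
      rw [e, hrec (Nat.find hex - 1)]
      have hy0' := ynn (Nat.find hex - 1)
      have hyh : h * y (Nat.find hex - 1) ≤ 1 := hyh1 _ (by omega)
      have b1 : h*(1+(y (Nat.find hex - 1))^2) ≤ (1/10)*(1+4) := by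
        have u1 : 0 ≤ (4 - (y (Nat.find hex - 1))^2)*h := by
          apply mul_nonneg _ hpos.le
          nlinarith
        nlinarith [u1]
      have b2 : γ*h^2*(y (Nat.find hex - 1))^3 ≤ (1/100)*8 := by
        have q1 : h*y (Nat.find hex - 1) ≤ 1/5 := by
          have := mul_le_mul_of_nonneg_left (le_of_lt hKmin) hpos.le
          nlinarith
        have hPnn : 0 ≤ (h*y (Nat.find hex - 1))*(h*y (Nat.find hex - 1)) := by positivity
        have qP : (h*y (Nat.find hex - 1))*(h*y (Nat.find hex - 1)) ≤ 1/25 := by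
          nlinarith [mul_nonneg hpos.le hy0']
        have q2 : γ*h^2*(y (Nat.find hex - 1))^3
            = γ*((h*y (Nat.find hex - 1))*(h*y (Nat.find hex - 1)))*(y (Nat.find hex - 1)) := by ring
        rw [q2]
        have t1 : 0 ≤ ((1-γ)*((h*y (Nat.find hex - 1))*(h*y (Nat.find hex - 1))))*(y (Nat.find hex - 1)) :=
          mul_nonneg (mul_nonneg (by linarith) hPnn) hy0'
        have t2 : ((h*y (Nat.find hex - 1))*(h*y (Nat.find hex - 1)))*(y (Nat.find hex - 1)) ≤ (1/25)*2 := by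
          apply mul_le_mul qP (le_of_lt hKmin) hy0' (by norm_num)
        nlinarith [t1, t2]
      linarith
    have hKm : Nat.find hex ≤ n - 9 := by omega
    have hsub : Ico (Nat.find hex) (n-9) ⊆ range n := by
      intro x hx
      rw [mem_Ico] at hx
      rw [mem_range]
      omega
    -- per-step lower bounds on the Ico
    have termlow : ∀ k ∈ Ico (Nat.find hex) (n-9),
        β*h*(Real.log (y (k+1)) - Real.log (y k)) - 3*β*h^2*(y (k+1) - y k)
          - 3*β*h*(1/(y k)^2 - 1/(y (k+1))^2)
        ≤ h - arctan ((y (k+1) - y k)/(1 + y k * y (k+1))) := by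
      intro k hk
      rw [mem_Ico] at hk
      have hy2 : 2 ≤ y k := le_trans hK2 (ymono hk.1)
      have hkn : k < n := by omega
      have hha : h * y k ≤ 1/10 := by
        have hybd := ybd' k hkn
        have h10' : (10:ℝ) ≤ ((n-k:ℕ):ℝ) := by
          have : 10 ≤ n - k := by omega
          exact_mod_cast this
        rw [le_div_iff₀ (by positivity)] at hybd
        nlinarith [mul_nonneg (mul_nonneg (ynn k) hpos.le)
          (by linarith : (0:ℝ) ≤ ((n-k:ℕ):ℝ) - 10)]
      exact step_lower hy2 hpos hha hγ0 hγ1 hβ (hrec k)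
    -- telescoping helper
    have tel : ∀ g : ℕ → ℝ, ∑ k ∈ Ico (Nat.find hex) (n-9), (g (k+1) - g k)
        = g (n-9) - g (Nat.find hex) := by
      intro g
      rw [Finset.sum_Ico_eq_sub _ hKm, Finset.sum_range_sub g, Finset.sum_range_sub g]
      ring
    have sum2 : ∑ k ∈ Ico (Nat.find hex) (n-9),
        (β*h*(Real.log (y (k+1)) - Real.log (y k)) - 3*β*h^2*(y (k+1) - y k)
          - 3*β*h*(1/(y k)^2 - 1/(y (k+1))^2))
        = β*h*(Real.log (y (n-9)) - Real.log (y (Nat.find hex)))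
          - 3*β*h^2*(y (n-9) - y (Nat.find hex))
          + 3*β*h*(1/(y (n-9))^2 - 1/(y (Nat.find hex))^2) := by
      have expand : ∀ k ∈ Ico (Nat.find hex) (n-9),
          β*h*(Real.log (y (k+1)) - Real.log (y k)) - 3*β*h^2*(y (k+1) - y k)
            - 3*β*h*(1/(y k)^2 - 1/(y (k+1))^2)
          = β*h*((fun i => Real.log (y i)) (k+1) - (fun i => Real.log (y i)) k)
            - 3*β*h^2*((fun i => y i) (k+1) - (fun i => y i) k)
            + 3*β*h*((fun i => 1/(y i)^2) (k+1) - (fun i => 1/(y i)^2) k) := by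
        intro k _
        simp only
        ring
      rw [Finset.sum_congr rfl expand]
      rw [Finset.sum_add_distrib, Finset.sum_sub_distrib, ← Finset.mul_sum, ← Finset.mul_sum,
        ← Finset.mul_sum, tel (fun i => Real.log (y i)), tel (fun i => y i),
        tel (fun i => 1/(y i)^2)]
    -- lower bound pieces
    have gK : Real.log (y (Nat.find hex)) ≤ 2 := by
      have := Real.log_le_sub_one_of_pos (by linarith : (0:ℝ) < y (Nat.find hex))
      linarith
    have gK0 : 0 ≤ Real.log (y (Nat.find hex)) := by
      apply Real.log_nonneg
      linarith
    have hm9 : n - 9 < n := by omega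
    have hym : h * y (n-9) ≤ 1/9 := by
      have hybd := ybd' (n-9) hm9
      have e9 : ((n-(n-9):ℕ):ℝ) = 9 := by
        have : n-(n-9) = 9 := by omega
        rw [this]
        norm_num
      rw [e9] at hybd
      rw [le_div_iff₀ (by positivity)] at hybd
      nlinarith [mul_nonneg (ynn (n-9)) hpos.le]
    have hy2m : 2 ≤ y (n-9) := le_trans hK2 (ymono hKm)
    have invK : 1/(y (Nat.find hex))^2 ≤ 1/4 := by
      rw [div_le_div_iff₀ (by positivity) (by norm_num)]
      nlinarith
    have invm : 0 ≤ 1/(y (n-9))^2 := by positivity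
    have ymK : y (Nat.find hex) ≤ y (n-9) := ymono hKm
    -- growth over last 9 steps
    have grow2 : ∀ j, j ≤ 9 → y (n-9+j) ≤ 4^j * y (n-9) := by
      intro j
      induction j with
      | zero => intro _; simp
      | succ m ihm =>
        intro hm
        have hk : n-9+m < n := by omega
        have hyh : h * y (n-9+m) ≤ 1 := hyh1 _ hk
        have hy2' : 2 ≤ y (n-9+m) := le_trans hy2m (ymono (by omega))
        have e : n-9+(m+1) = (n-9+m)+1 := by omega
        rw [e, hrec (n-9+m)]
        have ihm' := ihm (by omega)
        have p4 : (0:ℝ) < 4^m := by positivity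
        have b1 : h*(1+(y (n-9+m))^2) ≤ h + y (n-9+m) := by nlinarith [ynn (n-9+m)]
        have b2 : γ*h^2*(y (n-9+m))^3 ≤ y (n-9+m) := by
          have hPnn : 0 ≤ (h*y (n-9+m))*(h*y (n-9+m)) := by positivity
          have q1 : (h*y (n-9+m))*(h*y (n-9+m)) ≤ 1 := by
            nlinarith [mul_nonneg hpos.le (ynn (n-9+m))]
          have q2 : γ*h^2*(y (n-9+m))^3 = γ*((h*y (n-9+m))*(h*y (n-9+m)))*(y (n-9+m)) := by ring
          rw [q2]
          have t1 : 0 ≤ ((1-γ)*((h*y (n-9+m))*(h*y (n-9+m))))*(y (n-9+m)) :=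
            mul_nonneg (mul_nonneg (by linarith) hPnn) (ynn (n-9+m))
          have t2 : 0 ≤ (1 - (h*y (n-9+m))*(h*y (n-9+m)))*(y (n-9+m)) :=
            mul_nonneg (by linarith) (ynn (n-9+m))
          nlinarith [t1, t2]
        have : (4:ℝ)^(m+1)*(y (n-9)) = 4*(4^m*(y (n-9))) := by ring
        rw [this]
        nlinarith
    have ygrow : y n ≤ 4^9 * y (n-9) := by
      have hg := grow2 9 le_rfl
      have e : n-9+9 = n := by omega
      rw [e] at hg
      exact hg
    have lognle : Real.log (y n) ≤ Real.log (y (n-9)) + 18*Real.log 2 := by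
      have hm0 : (0:ℝ) < y (n-9) := by linarith
      calc Real.log (y n) ≤ Real.log (4^9 * y (n-9)) :=
            Real.log_le_log (ypos n (by omega)) ygrow
        _ = Real.log ((4:ℝ)^9) + Real.log (y (n-9)) := Real.log_mul (by positivity) hm0.ne'
        _ = Real.log ((2:ℝ)^18) + Real.log (y (n-9)) := by norm_num
        _ = 18*Real.log 2 + Real.log (y (n-9)) := by rw [Real.log_pow]; push_cast; ring
        _ = Real.log (y (n-9)) + 18*Real.log 2 := by ring
    have log2lt : Real.log 2 < 0.6931471808 := Real.log_two_lt_d9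
    have log20 : 0 ≤ Real.log 2 := Real.log_nonneg (by norm_num)
    -- assemble
    have sumlow : β*h*(Real.log (y (n-9)) - Real.log (y (Nat.find hex)))
          - 3*β*h^2*(y (n-9) - y (Nat.find hex))
          + 3*β*h*(1/(y (n-9))^2 - 1/(y (Nat.find hex))^2)
        ≤ π/2 - arctan (y n) := by
      rw [eps_eq]
      calc _ = ∑ k ∈ Ico (Nat.find hex) (n-9),
            (β*h*(Real.log (y (k+1)) - Real.log (y k)) - 3*β*h^2*(y (k+1) - y k)
              - 3*β*h*(1/(y k)^2 - 1/(y (k+1))^2)) := sum2.symm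
        _ ≤ ∑ k ∈ Ico (Nat.find hex) (n-9),
            (h - arctan ((y (k+1) - y k)/(1 + y k * y (k+1)))) := Finset.sum_le_sum termlow
        _ ≤ ∑ k ∈ range n, (h - arctan ((y (k+1) - y k)/(1 + y k * y (k+1)))) :=
            Finset.sum_le_sum_of_subset_of_nonneg hsub (fun k _ _ => Snn k)
    have tlog : β*h*Real.log (y n) ≤ β*h*Real.log (y (n-9)) + 18*(β*h*Real.log 2) := by
      have := mul_le_mul_of_nonneg_left lognle (by positivity : (0:ℝ) ≤ β*h)
      nlinarith [this]
    have tlog2 : β*h*Real.log 2 ≤ β*h*0.7 := by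
      apply mul_le_mul_of_nonneg_left (by linarith) (by positivity)
    have hbh : 0 ≤ (1-β)*h := mul_nonneg (by linarith) hpos.le
    have m1 : β*h^2*(y (n-9) - y (Nat.find hex)) ≤ β*h*(1/9) := by
      have : h*(y (n-9) - y (Nat.find hex)) ≤ 1/9 := by
        nlinarith [mul_nonneg hpos.le (ynn (Nat.find hex))]
      have e : β*h^2*(y (n-9) - y (Nat.find hex)) = β*h*(h*(y (n-9) - y (Nat.find hex))) := by ring
      rw [e]
      apply mul_le_mul_of_nonneg_left this (by positivity)
    have m2 : β*h*(1/(y (Nat.find hex))^2) ≤ β*h*(1/4) :=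
      mul_le_mul_of_nonneg_left invK (by positivity)
    have m3 : β*h*Real.log (y (Nat.find hex)) ≤ β*h*2 :=
      mul_le_mul_of_nonneg_left gK (by positivity)
    have m4 : 0 ≤ β*h*(1/(y (n-9))^2) := by positivity
    linarith [sumlow, tlog, tlog2, m1, m2, m3, m4, hbh, hpos.le]



set_option maxHeartbeats 4000000 in
/-- For an integer `b ≥ 2`, `κ_b = π√b/(√2(b−1))`, and the map
`M̃_n(x) = x + ((b−1)/(2n))x² + ((b−1)(b−2)/(6n²))x³ + κ_b²(b−1)/(bn)`, the `n`-fold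
iterate at `0` satisfies `(log n / n)·M̃_n^[n](0) → 6/(b+1)` as `n → ∞`. -/
theorem stmt19 (b : ℕ) (hb : 2 ≤ b) (kappa : ℝ)
    (hkappa : kappa = Real.pi * Real.sqrt b / (Real.sqrt 2 * ((b : ℝ) - 1)))
    (Mtilde : ℕ → ℝ → ℝ)
    (hMtilde : ∀ n : ℕ, ∀ x : ℝ,
      Mtilde n x = x + (((b : ℝ) - 1) / (2 * n)) * x ^ 2
        + ((((b : ℝ) - 1) * ((b : ℝ) - 2)) / (6 * (n : ℝ) ^ 2)) * x ^ 3
        + kappa ^ 2 * ((b : ℝ) - 1) / ((b : ℝ) * n)) :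
    Tendsto (fun n : ℕ => (Real.log n / n) * (Mtilde n)^[n] 0) atTop
      (nhds (6 / ((b : ℝ) + 1))) := by
  have hb2 : (2:ℝ) ≤ (b:ℝ) := by exact_mod_cast hb
  have hb1 : (0:ℝ) < (b:ℝ) - 1 := by linarith
  have hb0 : (0:ℝ) < (b:ℝ) := by linarith
  have hπ : (0:ℝ) < π := Real.pi_pos
  -- constants
  set γ : ℝ := 2*((b:ℝ)-2)/(3*((b:ℝ)-1)) with hγdef
  set β : ℝ := ((b:ℝ)+1)/(3*((b:ℝ)-1)) with hβdef
  have hγ0 : 0 ≤ γ := by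
    rw [hγdef]
    apply div_nonneg (by linarith) (by linarith)
  have hγ1 : γ ≤ 1 := by
    rw [hγdef, div_le_one (by positivity)]; linarith
  have hβγ : β = 1 - γ := by
    rw [hβdef, hγdef]; field_simp; ring
  have hβpos : 0 < β := by rw [hβdef]; positivity
  have hβ1 : β ≤ 1 := by rw [hβγ]; linarith
  -- kappa squared
  have hκ2 : kappa^2 = π^2*(b:ℝ)/(2*((b:ℝ)-1)^2) := by
    rw [hkappa, div_pow, mul_pow, mul_pow, Real.sq_sqrt hb0.le, Real.sq_sqrt (by norm_num : (0:ℝ) ≤ 2)]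
  -- rescaled sequence
  have hrecY : ∀ n : ℕ, 1 ≤ n → ∀ k : ℕ,
      (((b:ℝ)-1)/π) * (Mtilde n)^[k+1] 0
      = (((b:ℝ)-1)/π) * (Mtilde n)^[k] 0
        + (π/(2*n))*(1 + ((((b:ℝ)-1)/π) * (Mtilde n)^[k] 0)^2)
        + γ*(π/(2*n))^2*((((b:ℝ)-1)/π) * (Mtilde n)^[k] 0)^3 := by
    intro n hn k
    have hnR : (0:ℝ) < n := by exact_mod_cast hn
    rw [Function.iterate_succ_apply', hMtilde n ((Mtilde n)^[k] 0), hκ2, hγdef]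
    field_simp
    ring
  -- target function equals u * (6/(b+1)) for n ≥ 1
  set u : ℕ → ℝ := fun n => β*(π/(2*(n:ℝ)))*Real.log n*((((b:ℝ)-1)/π) * (Mtilde n)^[n] 0)
    with hudef
  have hueq : ∀ n : ℕ, 1 ≤ n →
      (Real.log n / n) * (Mtilde n)^[n] 0 = u n * (6/((b:ℝ)+1)) := by
    intro n hn
    have hnR : (0:ℝ) < n := by exact_mod_cast hn
    rw [hudef]
    simp only
    rw [hβdef]
    field_simp
    ring
  -- core consequences
  set Yf : ℕ → ℝ := fun n => (((b:ℝ)-1)/π) * (Mtilde n)^[n] 0 with hYdef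
  have hcore : ∀ n : ℕ, 16 ≤ n →
      (π/2 - arctan (Yf n) ≤ β*(π/(2*(n:ℝ)))*Real.log n + 10*(π/(2*(n:ℝ)))) ∧
      (β*(π/(2*(n:ℝ)))*Real.log (Yf n) - 20*(π/(2*(n:ℝ))) ≤ π/2 - arctan (Yf n)) ∧
      (0 < Yf n) := by
    intro n hn
    exact core n hn γ β (π/(2*(n:ℝ))) hγ0 hγ1 hβγ rfl
      (fun k => (((b:ℝ)-1)/π) * (Mtilde n)^[k] 0)
      (by simp) (hrecY n (by omega))
  -- limits infrastructure
  have hlogn : Tendsto (fun n : ℕ => Real.log n) atTop atTop :=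
    Real.tendsto_log_atTop.comp tendsto_natCast_atTop_atTop
  have hlogdiv : Tendsto (fun n : ℕ => Real.log n / (n:ℝ)) atTop (nhds 0) :=
    (Real.isLittleO_log_id_atTop.tendsto_div_nhds_zero).comp tendsto_natCast_atTop_atTop
  have hloglog : Tendsto (fun n : ℕ => Real.log (Real.log n) / Real.log n) atTop (nhds 0) :=
    (Real.isLittleO_log_id_atTop.tendsto_div_nhds_zero).comp hlogn
  have hinvn : Tendsto (fun n : ℕ => (1:ℝ)/(n:ℝ)) atTop (nhds 0) :=
    tendsto_one_div_atTop_nhds_zero_nat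
  set v : ℕ → ℝ := fun n => β*(π/(2*(n:ℝ)))*Real.log n + 10*(π/(2*(n:ℝ))) with hvdef
  have hv : Tendsto v atTop (nhds 0) := by
    have e : v = fun n : ℕ => (β*π/2)*(Real.log n/(n:ℝ)) + (5*π)*((1:ℝ)/(n:ℝ)) := by
      funext n
      rw [hvdef]
      ring
    rw [e]
    have := (hlogdiv.const_mul (β*π/2)).add (hinvn.const_mul (5*π))
    simpa using this
  set w : ℕ → ℝ := fun n => (1 - (v n)^2/2)*((β*Real.log n)/(β*Real.log n + 10)) with hwdef
  have hden : ∀ n : ℕ, 0 < β*Real.log n + 10 := by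
    intro n
    have := Real.log_natCast_nonneg n
    nlinarith
  have hw : Tendsto w atTop (nhds 1) := by
    have p1 : Tendsto (fun n : ℕ => 1 - (v n)^2/2) atTop (nhds 1) := by
      have := ((hv.mul hv).div_const 2).const_sub 1
      simpa [pow_two] using this
    have p2 : Tendsto (fun n : ℕ => (β*Real.log n)/(β*Real.log n + 10)) atTop (nhds 1) := by
      have e : (fun n : ℕ => (β*Real.log n)/(β*Real.log n + 10))
          = fun n : ℕ => 1 - 10/(β*Real.log n + 10) := by
        funext n
        have := hden n
        field_simp
        ring
      rw [e]
      have hd : Tendsto (fun n : ℕ => β*Real.log n + 10) atTop atTop :=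
        tendsto_atTop_add_const_right _ 10 (hlogn.const_mul_atTop hβpos)
      have := (tendsto_const_nhds (x := (10:ℝ)) (f := atTop (α := ℕ))).div_atTop hd
      have := this.const_sub 1
      simpa using this
    have := p1.mul p2
    simpa using this
  -- lower eventual bound
  have E_low : ∀ᶠ n in atTop, w n ≤ u n := by
    have hvev : ∀ᶠ n in atTop, v n < 1/2 := hv.eventually (gt_mem_nhds (by norm_num))
    filter_upwards [eventually_ge_atTop 16, hvev] with n hn16 hv12
    have hnR : (0:ℝ) < n := by
      have : (16:ℝ) ≤ n := by exact_mod_cast hn16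
      linarith
    have hH : 0 < π/(2*(n:ℝ)) := by positivity
    have hG1 : 1 ≤ Real.log n := by
      rw [Real.le_log_iff_exp_le hnR]
      have h1 := Real.exp_one_lt_d9
      have : (16:ℝ) ≤ n := by exact_mod_cast hn16
      nlinarith
    obtain ⟨CU, CL, CY⟩ := hcore n hn16
    have hv0 : 0 < v n := by
      rw [hvdef]
      have : 0 < β*(π/(2*(n:ℝ)))*Real.log n := by positivity
      positivity
    have einv : arctan (Yf n)⁻¹ = π/2 - arctan (Yf n) := Real.arctan_inv_of_pos CY
    have s1 : arctan ((Yf n)⁻¹) ≤ v n := by rw [einv, hvdef]; exact CU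
    have hv2 : v n < π/2 := by
      have := Real.pi_gt_three
      linarith
    have s2 : (Yf n)⁻¹ ≤ Real.tan (v n) := by
      conv_lhs => rw [← Real.tan_arctan ((Yf n)⁻¹)]
      rcases eq_or_lt_of_le s1 with heq | hlt
      · rw [heq]
      · exact le_of_lt (Real.tan_lt_tan_of_nonneg_of_lt_pi_div_two
          (my_arctan_nonneg (by positivity)) hv2 hlt)
    have c3 : 0 < 1 - (v n)^2/2 := by nlinarith [mul_lt_mul_of_pos_left hv12 hv0, hv0, hv12]
    have s3 : Real.tan (v n) ≤ v n/(1 - (v n)^2/2) := by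
      rw [Real.tan_eq_sin_div_cos]
      exact div_le_div₀ hv0.le (Real.sin_le hv0.le) c3 Real.one_sub_sq_div_two_le_cos
    have s4 : (1 - (v n)^2/2)/(v n) ≤ Yf n := by
      have q0 : 0 < v n/(1 - (v n)^2/2) := by positivity
      have hYinv : 0 < (Yf n)⁻¹ := by positivity
      have h5 : (v n/(1 - (v n)^2/2))⁻¹ ≤ ((Yf n)⁻¹)⁻¹ :=
        inv_anti₀ hYinv (s2.trans s3)
      rw [inv_inv, inv_div] at h5
      exact h5
    have s5 : β*(π/(2*(n:ℝ)))*Real.log n*((1 - (v n)^2/2)/(v n)) ≤ u n := by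
      rw [hudef]
      simp only
      exact mul_le_mul_of_nonneg_left s4 (by positivity)
    have e6 : β*(π/(2*(n:ℝ)))*Real.log n*((1 - (v n)^2/2)/(v n)) = w n := by
      have hd := hden n
      have hv0' := hv0
      simp only [hwdef, hvdef] at hv0' ⊢
      field_simp
    linarith [s5, e6.symm.le]
  -- final squeeze
  have hmain : Tendsto u atTop (nhds 1) := by
    rw [tendsto_order]
    constructor
    · intro a ha
      have hwa : ∀ᶠ n in atTop, a < w n := hw.eventually (lt_mem_nhds ha)
      filter_upwards [hwa, E_low] with n h1 h2
      linarith
    · intro a ha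
      have hδ : 0 < (a-1)/2 := by linarith
      have h1δ : (1:ℝ) < 1 + (a-1)/2 := by linarith
      have hqlt : (1+(a-1)/2)⁻¹ < 1 := inv_lt_one_of_one_lt₀ h1δ
      have hq0 : 0 < (1+(a-1)/2)⁻¹ := by positivity
      have hδ0 : 0 < β*(1-(1+(a-1)/2)⁻¹) := mul_pos hβpos (by linarith)
      have ev1 : ∀ᶠ n : ℕ in atTop,
          Real.log (Real.log (n:ℝ))/Real.log (n:ℝ) < (β*(1-(1+(a-1)/2)⁻¹))/(2*β) :=
        hloglog.eventually (gt_mem_nhds (div_pos hδ0 (by positivity)))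
      have ev2 : ∀ᶠ n : ℕ in atTop, (46/(β*(1-(1+(a-1)/2)⁻¹)) : ℝ) ≤ Real.log (n:ℝ) :=
        hlogn.eventually_ge_atTop _
      filter_upwards [ev1, ev2, eventually_ge_atTop 16] with n e1 e2 hn16
      have hnR : (0:ℝ) < n := by
        have : (16:ℝ) ≤ n := by exact_mod_cast hn16
        linarith
      have hG0 : 0 < Real.log n := lt_of_lt_of_le (by positivity) e2
      have good : β*Real.log (Real.log n) + 23 ≤ (β*(1-(1+(a-1)/2)⁻¹))*Real.log n := by
        have g1 : Real.log (Real.log n) < ((β*(1-(1+(a-1)/2)⁻¹))/(2*β))*Real.log n := by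
          rw [div_lt_iff₀ hG0] at e1
          linarith [e1]
        have g2 : β*Real.log (Real.log n) < ((β*(1-(1+(a-1)/2)⁻¹))/2)*Real.log n := by
          have h6 := mul_lt_mul_of_pos_left g1 hβpos
          have e : β*(((β*(1-(1+(a-1)/2)⁻¹))/(2*β))*Real.log n)
              = ((β*(1-(1+(a-1)/2)⁻¹))/2)*Real.log n := by
            field_simp
          linarith [e ▸ h6]
        have g3 : (23:ℝ) ≤ ((β*(1-(1+(a-1)/2)⁻¹))/2)*Real.log n := by
          have h7 := mul_le_mul_of_nonneg_left e2 hδ0.le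
          have e : (β*(1-(1+(a-1)/2)⁻¹))*(46/(β*(1-(1+(a-1)/2)⁻¹))) = 46 := by
            rw [mul_comm, div_mul_cancel₀ _ hδ0.ne']
          nlinarith [h7, e]
        linarith [g2, g3]
      obtain ⟨CU, CL, CY⟩ := hcore n hn16
      have hH : 0 < π/(2*(n:ℝ)) := by positivity
      have hBHG : 0 < β*(π/(2*(n:ℝ)))*Real.log n := by positivity
      by_contra hcon
      push_neg at hcon
      have hun : u n = β*(π/(2*(n:ℝ)))*Real.log n*(Yf n) := by
        simp only [hudef, hYdef]
      have hcon' : 1 + (a-1)/2 < β*(π/(2*(n:ℝ)))*Real.log n*(Yf n) := by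
        rw [← hun]
        linarith
      have hW : (1+(a-1)/2)/(β*(π/(2*(n:ℝ)))*Real.log n) < Yf n := by
        rw [div_lt_iff₀ hBHG]
        linarith [hcon']
      have hWpos : 0 < (1+(a-1)/2)/(β*(π/(2*(n:ℝ)))*Real.log n) := by positivity
      have A4 : (Yf n)⁻¹ < (β*(π/(2*(n:ℝ)))*Real.log n)*(1+(a-1)/2)⁻¹ := by
        have h8 := inv_strictAnti₀ hWpos hW
        calc (Yf n)⁻¹ < ((1+(a-1)/2)/(β*(π/(2*(n:ℝ)))*Real.log n))⁻¹ := h8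
          _ = (β*(π/(2*(n:ℝ)))*Real.log n)*(1+(a-1)/2)⁻¹ := by
            rw [inv_div, div_eq_mul_inv]
      have A5 : Real.log ((1+(a-1)/2)/(β*(π/(2*(n:ℝ)))*Real.log n)) ≤ Real.log (Yf n) :=
        Real.log_le_log hWpos hW.le
      have hlogW : Real.log ((1+(a-1)/2)/(β*(π/(2*(n:ℝ)))*Real.log n))
          = Real.log (1+(a-1)/2)
            - (Real.log β + Real.log (π/(2*(n:ℝ))) + Real.log (Real.log n)) := by
        rw [Real.log_div (by positivity) (by positivity), Real.log_mul (by positivity) hG0.ne',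
          Real.log_mul hβpos.ne' hH.ne']
      have hlogH : Real.log (π/(2*(n:ℝ))) = Real.log π - (Real.log 2 + Real.log n) := by
        rw [Real.log_div hπ.ne' (by positivity), Real.log_mul (by norm_num) hnR.ne']
      have hlogβ : Real.log β ≤ 0 := Real.log_nonpos hβpos.le hβ1
      have hlog1δ : 0 ≤ Real.log (1+(a-1)/2) := Real.log_nonneg (by linarith)
      have hlogπ : Real.log π ≤ 1.2 := by
        rw [Real.log_le_iff_le_exp hπ]
        have e1' : Real.exp (1.2:ℝ) = (Real.exp 0.05)^24 := by
          rw [← Real.exp_nat_mul]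
          norm_num
        have e2' : (1.05:ℝ) ≤ Real.exp 0.05 := by nlinarith [Real.add_one_le_exp (0.05:ℝ)]
        have e3' : (1.05:ℝ)^24 ≤ (Real.exp 0.05)^24 := pow_le_pow_left₀ (by norm_num) e2' 24
        have e4' : (3.15:ℝ) ≤ (1.05:ℝ)^24 := by norm_num
        nlinarith [Real.pi_lt_d2]
      have hlog2 : 0 ≤ Real.log 2 := Real.log_nonneg one_le_two
      have LYlow : Real.log n - Real.log (Real.log n) - 1.2 ≤ Real.log (Yf n) := by
        rw [hlogW, hlogH] at A5
        linarith
      have B1 : β*(π/(2*(n:ℝ)))*(Real.log n - Real.log (Real.log n) - 1.2)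
          ≤ β*(π/(2*(n:ℝ)))*Real.log (Yf n) :=
        mul_le_mul_of_nonneg_left LYlow (by positivity)
      have einv : arctan (Yf n)⁻¹ = π/2 - arctan (Yf n) := Real.arctan_inv_of_pos CY
      have harc : arctan ((Yf n)⁻¹) ≤ (Yf n)⁻¹ := my_arctan_le_self (by positivity)
      have goodH := mul_le_mul_of_nonneg_left good hH.le
      have hbh : 0 ≤ (1-β)*(π/(2*(n:ℝ))) := mul_nonneg (by linarith) hH.le
      linarith [B1, CL, einv, harc, A4, goodH, hbh, hH]
  have : Tendsto (fun n : ℕ => u n * (6/((b:ℝ)+1))) atTop (nhds (1 * (6/((b:ℝ)+1)))) :=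
    hmain.mul_const _
  have : Tendsto (fun n : ℕ => u n * (6/((b:ℝ)+1))) atTop (nhds (1 * (6/((b:ℝ)+1)))) :=
    hmain.mul_const _
  rw [one_mul] at this
  apply this.congr'
  filter_upwards [eventually_ge_atTop 1] with n hn
  exact (hueq n hn).symm
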